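/- arXiv:1602.06221 — 2 statements merged into one kernel-verified Lean document; each statement's English description precedes it below -/
import Mathlib

section
/- If C and D are Cpo-algebraically compact Cpo-categories, then the product category C × D, which is a Cpo-category with hom-sets ordered componentwise, is Cpo-algebraically compact: every Cpo-endofunctor of C × D has an initial algebra whose structure map is an isomorphism and whose inverse is a terminal coalgebra. -/
open CategoryTheory OmegaCompletePartialOrder Limits

universe w v u v₁ u₁ v₂ u₂

/-- A `Cpo`-category: a category whose hom-sets carry an ω-complete partial
order such that composition is monotone and ω-continuous in each argument. -/
class CpoCategory (C : Type u) [Category.{v} C]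
    [∀ X Y : C, OmegaCompletePartialOrder (X ⟶ Y)] : Prop where
  comp_le_comp : ∀ {X Y Z : C} {f f' : X ⟶ Y} {g g' : Y ⟶ Z},
      f ≤ f' → g ≤ g' → f ≫ g ≤ f' ≫ g'
  ωSup_comp : ∀ {X Y Z : C} (c : Chain (X ⟶ Y)) (g : Y ⟶ Z),
      ωSup c ≫ g = ωSup (c.map ⟨fun f => f ≫ g, fun _ _ h => comp_le_comp h le_rfl⟩)
  comp_ωSup : ∀ {X Y Z : C} (f : X ⟶ Y) (c : Chain (Y ⟶ Z)),
      f ≫ ωSup c = ωSup (c.map ⟨fun g => f ≫ g, fun _ _ h => comp_le_comp le_rfl h⟩)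

/-- A `Cpo`-functor: a functor between `Cpo`-categories whose action on
hom-sets is monotone and preserves suprema of ω-chains. -/
def IsCpoFunctor {C : Type u} {D : Type u₁} [Category.{v} C] [Category.{v₁} D]
    [∀ X Y : C, OmegaCompletePartialOrder (X ⟶ Y)]
    [∀ X Y : D, OmegaCompletePartialOrder (X ⟶ Y)] (F : C ⥤ D) : Prop :=
  ∀ (X Y : C), ∃ hm : Monotone (fun f : X ⟶ Y => F.map f),
    ∀ c : Chain (X ⟶ Y), F.map (ωSup c) = ωSup (c.map ⟨fun f => F.map f, hm⟩)

instance instOppositeTypePartialOrder {α : Type u} [PartialOrder α] : PartialOrder (αᵒᵖ) :=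
  PartialOrder.lift Opposite.unop Opposite.unop_injective

instance instOppositeTypeOmega {α : Type u} [OmegaCompletePartialOrder α] :
    OmegaCompletePartialOrder (αᵒᵖ) :=
  OmegaCompletePartialOrder.lift (⟨Opposite.unop, fun _ _ h => h⟩ : αᵒᵖ →o α)
    (fun c => Opposite.op (ωSup (c.map (⟨Opposite.unop, fun _ _ h => h⟩ : αᵒᵖ →o α))))
    (fun _ _ h => h) (fun _ => rfl)

/-- The hom-sets of the opposite of a `Cpo`-category carry the same orders. -/
instance instOppositeHomOmega {C : Type u} [Category.{v} C]
    [∀ X Y : C, OmegaCompletePartialOrder (X ⟶ Y)] :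
    ∀ X Y : Cᵒᵖ, OmegaCompletePartialOrder (X ⟶ Y) :=
  fun X Y => inferInstanceAs (OmegaCompletePartialOrder ((Y.unop ⟶ X.unop)ᵒᵖ))

/-- The hom-sets of a product of `Cpo`-categories are ordered componentwise. -/
instance instProdHomOmega {C : Type u} {D : Type u₁} [Category.{v} C] [Category.{v₁} D]
    [∀ X Y : C, OmegaCompletePartialOrder (X ⟶ Y)]
    [∀ X Y : D, OmegaCompletePartialOrder (X ⟶ Y)] :
    ∀ X Y : C × D, OmegaCompletePartialOrder (X ⟶ Y) :=
  fun X Y => inferInstanceAs (OmegaCompletePartialOrder ((X.1 ⟶ Y.1) × (X.2 ⟶ Y.2)))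

/-- A `Cpo`-category is `Cpo`-algebraically compact when every
`Cpo`-endofunctor has an initial algebra whose structure map is an isomorphism
and whose inverse is a terminal coalgebra. -/
def CpoAlgebraicallyCompact (C : Type u) [Category.{v} C]
    [∀ X Y : C, OmegaCompletePartialOrder (X ⟶ Y)] : Prop :=
  ∀ F : C ⥤ C, IsCpoFunctor F →
    ∃ A : Endofunctor.Algebra F, Nonempty (IsInitial A) ∧
      ∃ b : A.a ⟶ F.obj A.a, A.str ≫ b = 𝟙 (F.obj A.a) ∧ b ≫ A.str = 𝟙 A.a ∧
        Nonempty (IsTerminal (⟨A.a, b⟩ : Endofunctor.Coalgebra F))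

namespace ProdCompactAux
set_option linter.unusedSectionVars false

section order


theorem ωSup_congr' {α : Type w} [OmegaCompletePartialOrder α] {c c' : Chain α}
    (h : ∀ n, c n = c' n) : ωSup c = ωSup c' := by
  exact congrArg ωSup (Chain.ext (funext h))

theorem ωSup_const' {α : Type w} [OmegaCompletePartialOrder α] (c : Chain α) (x : α)
    (h : ∀ n, c n = x) : ωSup c = x := by
  refine le_antisymm (ωSup_le _ _ fun n => (h n).le) ?_
  exact (h 0).symm.le.trans (le_ωSup c 0)

theorem unique_fix_le {α : Type w} [OmegaCompletePartialOrder α]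
    (Φ : α →o α) (hcont : ∀ c : Chain α, Φ (ωSup c) = ωSup (c.map Φ))
    {h h' : α} (hle : h ≤ Φ h) (hfix : ∀ z : α, Φ z = z → z = h') : h ≤ h' := by
  have mono : Monotone fun n => Φ^[n] h := by
    apply monotone_nat_of_le_succ
    intro n
    induction n with
    | zero => simpa using hle
    | succ n ih =>
        rw [Function.iterate_succ_apply', Function.iterate_succ_apply']
        exact Φ.mono ih
  set c : Chain α := ⟨fun n => Φ^[n] h, mono⟩ with hc
  have hfp : Φ (ωSup c) = ωSup c := by
    rw [hcont]
    apply le_antisymm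
    · apply ωSup_le
      intro n
      have h1 : (c.map Φ) n = c (n + 1) := by
        show Φ ((⇑Φ)^[n] h) = (⇑Φ)^[n+1] h
        rw [Function.iterate_succ_apply']
      rw [h1]; exact le_ωSup c (n + 1)
    · apply ωSup_le
      intro n
      have h1 : c n ≤ (c.map Φ) n := by
        show (⇑Φ)^[n] h ≤ Φ ((⇑Φ)^[n] h)
        have h2 := mono (Nat.le_succ n)
        simp only [Nat.succ_eq_add_one, Function.iterate_succ_apply'] at h2
        exact h2
      exact le_trans h1 (le_ωSup _ n)
  have h3 : ωSup c = h' := hfix _ hfp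
  have h0 : h = c 0 := rfl
  rw [h0, ← h3]
  exact le_ωSup c 0


end order

section cpocat
variable {C : Type u} [Category.{v} C] [∀ X Y : C, OmegaCompletePartialOrder (X ⟶ Y)]
  [CpoCategory C]

theorem comp_ωSup_comp {W X Y Z : C} (f : W ⟶ X) (c : Chain (X ⟶ Y)) (g : Y ⟶ Z)
    (c' : Chain (W ⟶ Z)) (h : ∀ n, c' n = f ≫ c n ≫ g) :
    f ≫ ωSup c ≫ g = ωSup c' := by
  rw [CpoCategory.ωSup_comp c g, CpoCategory.comp_ωSup f]
  refine ωSup_congr' fun n => ?_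
  show f ≫ c n ≫ g = c' n
  rw [h n]

end cpocat

section cpofun
variable {C : Type u} {D : Type u₁} [Category.{v} C] [Category.{v₁} D]
  [∀ X Y : C, OmegaCompletePartialOrder (X ⟶ Y)]
  [∀ X Y : D, OmegaCompletePartialOrder (X ⟶ Y)]

theorem cpoMono {F : C ⥤ D} (hF : IsCpoFunctor F) {X Y : C} {f f' : X ⟶ Y}
    (h : f ≤ f') : F.map f ≤ F.map f' := by
  obtain ⟨hm, -⟩ := hF X Y
  exact hm h

theorem cpoMapωSup {F : C ⥤ D} (hF : IsCpoFunctor F) {X Y : C} (c : Chain (X ⟶ Y))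
    (c' : Chain (F.obj X ⟶ F.obj Y)) (h : ∀ n, c' n = F.map (c n)) :
    F.map (ωSup c) = ωSup c' := by
  obtain ⟨hm, hs⟩ := hF X Y
  rw [hs c]
  exact ωSup_congr' fun n => (h n).symm

end cpofun

section bifree
variable {E : Type u₂} [Category.{v₂} E]

/-- A bifree algebra: initial algebra whose inverse is a terminal coalgebra. -/
structure Bifree (T : E ⥤ E) where
  A : E
  a : T.obj A ⟶ A
  b : A ⟶ T.obj A
  ab : a ≫ b = 𝟙 (T.obj A)
  ba : b ≫ a = 𝟙 A
  init : IsInitial (⟨A, a⟩ : Endofunctor.Algebra T)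
  term : IsTerminal (⟨A, b⟩ : Endofunctor.Coalgebra T)

theorem exists_bifree [∀ X Y : E, OmegaCompletePartialOrder (X ⟶ Y)]
    (hE : CpoAlgebraicallyCompact E) (T : E ⥤ E) (hT : IsCpoFunctor T) :
    Nonempty (Bifree T) := by
  obtain ⟨A, ⟨hinit⟩, b, hb1, hb2, ⟨hterm⟩⟩ := hE T hT
  exact ⟨⟨A.a, A.str, b, hb1, hb2, hinit, hterm⟩⟩

namespace Bifree
variable {T : E ⥤ E} (R : Bifree T)

noncomputable def fold {X : E} (x : T.obj X ⟶ X) : R.A ⟶ X :=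
  (R.init.to ⟨X, x⟩).f

theorem fold_fix {X : E} (x : T.obj X ⟶ X) : R.b ≫ T.map (R.fold x) ≫ x = R.fold x := by
  have h := (R.init.to ⟨X, x⟩).h
  show R.b ≫ T.map (R.init.to ⟨X, x⟩).f ≫ x = (R.init.to ⟨X, x⟩).f
  rw [h, ← Category.assoc, R.ba, Category.id_comp]

theorem fold_unique {X : E} (x : T.obj X ⟶ X) (m : R.A ⟶ X)
    (hm : R.b ≫ T.map m ≫ x = m) : m = R.fold x := by
  have hh : T.map m ≫ x = R.a ≫ m := by
    conv_rhs => rw [← hm]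
    rw [← Category.assoc, ← Category.assoc, R.ab, Category.id_comp]
  exact congrArg Endofunctor.Algebra.Hom.f
    (R.init.hom_ext (⟨m, hh⟩ : (⟨R.A, R.a⟩ : Endofunctor.Algebra T) ⟶ ⟨X, x⟩) (R.init.to ⟨X, x⟩))

noncomputable def unfold {X : E} (x : X ⟶ T.obj X) : X ⟶ R.A :=
  (R.term.from ⟨X, x⟩).f

theorem unfold_fix {X : E} (x : X ⟶ T.obj X) : x ≫ T.map (R.unfold x) ≫ R.a = R.unfold x := by
  have h := (R.term.from ⟨X, x⟩).h
  show x ≫ T.map (R.term.from ⟨X, x⟩).f ≫ R.a = (R.term.from ⟨X, x⟩).f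
  rw [← Category.assoc, h, Category.assoc, R.ba, Category.comp_id]

theorem unfold_unique {X : E} (x : X ⟶ T.obj X) (m : X ⟶ R.A)
    (hm : x ≫ T.map m ≫ R.a = m) : m = R.unfold x := by
  have hh : x ≫ T.map m = m ≫ R.b := by
    conv_rhs => rw [← hm]
    rw [Category.assoc, Category.assoc, R.ab, Category.comp_id]
  exact congrArg Endofunctor.Coalgebra.Hom.f
    (R.term.hom_ext (⟨m, hh⟩ : (⟨X, x⟩ : Endofunctor.Coalgebra T) ⟶ ⟨R.A, R.b⟩) (R.term.from ⟨X, x⟩))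

end Bifree
end bifree
end ProdCompactAux
namespace ProdCompactAux
set_option linter.unusedSectionVars false
section prodsec
variable {C : Type u} {D : Type u₁} [Category.{v} C] [Category.{v₁} D]
  [∀ X Y : C, OmegaCompletePartialOrder (X ⟶ Y)]
  [∀ X Y : D, OmegaCompletePartialOrder (X ⟶ Y)]

/-- A pair of morphisms as a morphism in the product category. -/
def pmor {X X' : C} {Y Y' : D} (f : X ⟶ X') (g : Y ⟶ Y') :
    ((X, Y) : C × D) ⟶ ((X', Y') : C × D) := (f, g)

theorem pmor_comp {X X' X'' : C} {Y Y' Y'' : D} (f : X ⟶ X') (f' : X' ⟶ X'')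
    (g : Y ⟶ Y') (g' : Y' ⟶ Y'') : pmor f g ≫ pmor f' g' = pmor (f ≫ f') (g ≫ g') := rfl

theorem pmor_id (X : C) (Y : D) : pmor (𝟙 X) (𝟙 Y) = 𝟙 ((X, Y) : C × D) := rfl

theorem pmor_le {X X' : C} {Y Y' : D} {f f' : X ⟶ X'} {g g' : Y ⟶ Y'}
    (h1 : f ≤ f') (h2 : g ≤ g') : pmor f g ≤ pmor f' g' := ⟨h1, h2⟩

theorem prod_ωSup_eq {P Q : C × D} (c : Chain (P ⟶ Q)) (c₁ : Chain (P.1 ⟶ Q.1))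
    (c₂ : Chain (P.2 ⟶ Q.2)) (h₁ : ∀ n, (c n).1 = c₁ n) (h₂ : ∀ n, (c n).2 = c₂ n) :
    ωSup c = (ωSup c₁, ωSup c₂) := by
  have h : ωSup c = (ωSup (c.map OrderHom.fst), ωSup (c.map OrderHom.snd)) := rfl
  rw [h]
  exact Prod.ext (ωSup_congr' h₁) (ωSup_congr' h₂)

theorem pmor_ωSup {X X' : C} {Y Y' : D} (c : Chain (X ⟶ X')) (c' : Chain (Y ⟶ Y'))
    (e : Chain (((X, Y) : C × D) ⟶ ((X', Y') : C × D)))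
    (he : ∀ n, e n = pmor (c n) (c' n)) :
    pmor (ωSup c) (ωSup c') = ωSup e := by
  rw [prod_ωSup_eq e c c' (fun n => by rw [he n]; rfl) (fun n => by rw [he n]; rfl)]
  rfl

theorem map_fst_comp (F : C × D ⥤ C × D) {P Q R : C × D} (u : P ⟶ Q) (v : Q ⟶ R) :
    (F.map u).1 ≫ (F.map v).1 = (F.map (u ≫ v)).1 := by
  rw [F.map_comp]; rfl

theorem map_snd_comp (F : C × D ⥤ C × D) {P Q R : C × D} (u : P ⟶ Q) (v : Q ⟶ R) :
    (F.map u).2 ≫ (F.map v).2 = (F.map (u ≫ v)).2 := by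
  rw [F.map_comp]; rfl

/-- The endofunctor `X ↦ (F (X, Y)).1` of `C`, for fixed `Y`. -/
@[reducible] def fstF (F : C × D ⥤ C × D) (Y : D) : C ⥤ C where
  obj X := (F.obj (X, Y)).1
  map {X X'} f := (F.map (pmor f (𝟙 Y))).1
  map_id X := by
    show (F.map (pmor (𝟙 X) (𝟙 Y))).1 = 𝟙 _
    rw [pmor_id, F.map_id]; rfl
  map_comp {X X' X''} f g := by
    show (F.map (pmor (f ≫ g) (𝟙 Y))).1 = (F.map (pmor f (𝟙 Y))).1 ≫ (F.map (pmor g (𝟙 Y))).1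
    rw [map_fst_comp F (pmor f (𝟙 Y)) (pmor g (𝟙 Y)), pmor_comp]
    simp

theorem fstF_map (F : C × D ⥤ C × D) (Y : D) {X X' : C} (f : X ⟶ X') :
    (fstF F Y).map f = (F.map (pmor f (𝟙 Y))).1 := rfl

theorem fstF_cpo (F : C × D ⥤ C × D) (hF : IsCpoFunctor F) (Y : D) :
    IsCpoFunctor (fstF F Y) := by
  intro X X'
  have hm : Monotone (fun f : X ⟶ X' => (fstF F Y).map f) := by
    intro f f' hle
    exact (cpoMono hF (pmor_le hle le_rfl)).1
  refine ⟨hm, fun c => ?_⟩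
  let e : Chain (((X, Y) : C × D) ⟶ ((X', Y) : C × D)) :=
    ⟨fun n => pmor (c n) (𝟙 Y), fun i j hij => pmor_le (c.mono hij) le_rfl⟩
  have hpair : pmor (ωSup c) (𝟙 Y) = ωSup e := by
    have h1 : (𝟙 Y : Y ⟶ Y) = ωSup ⟨fun _ => 𝟙 Y, fun _ _ _ => le_rfl⟩ :=
      (ωSup_const' _ (𝟙 Y) (fun _ => rfl)).symm
    rw [h1]
    exact pmor_ωSup c _ e (fun _ => rfl)
  show (F.map (pmor (ωSup c) (𝟙 Y))).1 = _
  rw [hpair,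
    cpoMapωSup hF e (e.map ⟨fun u => F.map u, fun _ _ h => cpoMono hF h⟩) (fun _ => rfl)]
  exact ωSup_congr'
    (c := (e.map ⟨fun u => F.map u, fun _ _ h => cpoMono hF h⟩).map OrderHom.fst)
    (c' := c.map ⟨fun f => (fstF F Y).map f, hm⟩) (fun n => rfl)

end prodsec
end ProdCompactAux
namespace ProdCompactAux
set_option linter.unusedSectionVars false
section main
variable {C : Type u} {D : Type u₁} [Category.{v} C] [Category.{v₁} D]
  [∀ X Y : C, OmegaCompletePartialOrder (X ⟶ Y)]
  [∀ X Y : D, OmegaCompletePartialOrder (X ⟶ Y)]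
  [CpoCategory C] [CpoCategory D]
variable (F : C × D ⥤ C × D) (hF : IsCpoFunctor F) (hC : CpoAlgebraicallyCompact C)

theorem pmor_decomp₁ {X X' : C} {Y Y' : D} (p : X ⟶ X') (q : Y ⟶ Y') :
    pmor p q = pmor p (𝟙 Y) ≫ pmor (𝟙 X') q := by
  rw [pmor_comp, Category.comp_id, Category.id_comp]

theorem pmor_decomp₂ {X X' : C} {Y Y' : D} (p : X ⟶ X') (q : Y ⟶ Y') :
    pmor p q = pmor (𝟙 X) q ≫ pmor p (𝟙 Y') := by
  rw [pmor_comp, Category.comp_id, Category.id_comp]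

/-- bifree algebra for `X ↦ (F (X,Y)).1`. -/
noncomputable def AY (Y : D) : Bifree (fstF F Y) :=
  Classical.choice (exists_bifree hC (fstF F Y) (fstF_cpo F hF Y))

/-- The mediating map between parameterized bifree algebras. -/
noncomputable def Gmap {Y Y' : D} (g : Y ⟶ Y') : (AY F hF hC Y).A ⟶ (AY F hF hC Y').A :=
  (AY F hF hC Y).fold ((F.map (pmor (𝟙 (AY F hF hC Y').A) g)).1 ≫ (AY F hF hC Y').a)

theorem Gmap_fix {Y Y' : D} (g : Y ⟶ Y') :
    (AY F hF hC Y).b ≫ (F.map (pmor (Gmap F hF hC g) g)).1 ≫ (AY F hF hC Y').a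
      = Gmap F hF hC g := by
  have h := (AY F hF hC Y).fold_fix ((F.map (pmor (𝟙 (AY F hF hC Y').A) g)).1 ≫ (AY F hF hC Y').a)
  rw [fstF_map] at h
  rw [pmor_decomp₁, ← map_fst_comp]
  simp only [Category.assoc] at h ⊢
  exact h

theorem Gmap_unique {Y Y' : D} (g : Y ⟶ Y') (m : (AY F hF hC Y).A ⟶ (AY F hF hC Y').A)
    (hm : (AY F hF hC Y).b ≫ (F.map (pmor m g)).1 ≫ (AY F hF hC Y').a = m) :
    m = Gmap F hF hC g := by
  apply (AY F hF hC Y).fold_unique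
  rw [fstF_map]
  rw [pmor_decomp₁ m g, ← map_fst_comp] at hm
  simp only [Category.assoc] at hm ⊢
  exact hm

theorem Gmap_id (Y : D) : Gmap F hF hC (𝟙 Y) = 𝟙 (AY F hF hC Y).A := by
  symm
  apply Gmap_unique
  rw [pmor_id, F.map_id]
  show (AY F hF hC Y).b ≫ 𝟙 _ ≫ (AY F hF hC Y).a = 𝟙 _
  rw [Category.id_comp, (AY F hF hC Y).ba]

theorem Gmap_comp {Y Y' Y'' : D} (g : Y ⟶ Y') (g' : Y' ⟶ Y'') :
    Gmap F hF hC (g ≫ g') = Gmap F hF hC g ≫ Gmap F hF hC g' := by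
  symm
  apply Gmap_unique
  have hsplit : pmor (Gmap F hF hC g ≫ Gmap F hF hC g') (g ≫ g')
      = pmor (Gmap F hF hC g) g ≫ pmor (Gmap F hF hC g') g' := by
    rw [pmor_comp]
  rw [hsplit, ← map_fst_comp]
  conv_rhs => rw [← Gmap_fix F hF hC g, ← Gmap_fix F hF hC g']
  simp only [Category.assoc]
  rw [← Category.assoc (AY F hF hC Y').a (AY F hF hC Y').b, (AY F hF hC Y').ab,
    Category.id_comp]

theorem Gmap_mono {Y Y' : D} : Monotone (fun g : Y ⟶ Y' => Gmap F hF hC g) := by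
  intro g g' hg
  let Φ : ((AY F hF hC Y).A ⟶ (AY F hF hC Y').A) →o ((AY F hF hC Y).A ⟶ (AY F hF hC Y').A) :=
    ⟨fun m => (AY F hF hC Y).b ≫ (F.map (pmor m g')).1 ≫ (AY F hF hC Y').a,
     fun m m' h => CpoCategory.comp_le_comp le_rfl
       (CpoCategory.comp_le_comp ((cpoMono hF (pmor_le h le_rfl)).1) le_rfl)⟩
  refine unique_fix_le Φ (fun c => ?_) ?_ (fun z hz => Gmap_unique F hF hC g' z hz)
  · show (AY F hF hC Y).b ≫ (F.map (pmor (ωSup c) g')).1 ≫ (AY F hF hC Y').a = _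
    let e : Chain (((AY F hF hC Y).A, Y) ⟶ (((AY F hF hC Y').A, Y') : C × D)) :=
      ⟨fun n => pmor (c n) g', fun i j hij => pmor_le (c.mono hij) le_rfl⟩
    have h1 : (g' : Y ⟶ Y') = ωSup ⟨fun _ => g', fun _ _ _ => le_rfl⟩ :=
      (ωSup_const' _ g' (fun _ => rfl)).symm
    rw [show pmor (ωSup c) g' = ωSup e from by
      rw [h1]; exact pmor_ωSup c _ e (fun _ => rfl)]
    rw [cpoMapωSup hF e (e.map ⟨fun u => F.map u, fun _ _ h => cpoMono hF h⟩) (fun _ => rfl)]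
    exact comp_ωSup_comp (AY F hF hC Y).b
      ((e.map ⟨fun u => F.map u, fun _ _ h => cpoMono hF h⟩).map OrderHom.fst)
      (AY F hF hC Y').a (c.map Φ) (fun n => rfl)
  · show Gmap F hF hC g ≤ (AY F hF hC Y).b ≫ (F.map (pmor (Gmap F hF hC g) g')).1 ≫ (AY F hF hC Y').a
    conv_lhs => rw [← Gmap_fix F hF hC g]
    exact CpoCategory.comp_le_comp le_rfl
      (CpoCategory.comp_le_comp ((cpoMono hF (pmor_le le_rfl hg)).1) le_rfl)

theorem Gmap_ωSup {Y Y' : D} (c : Chain (Y ⟶ Y'))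
    (c' : Chain ((AY F hF hC Y).A ⟶ (AY F hF hC Y').A))
    (h : ∀ n, c' n = Gmap F hF hC (c n)) :
    Gmap F hF hC (ωSup c) = ωSup c' := by
  symm
  apply Gmap_unique
  let e : Chain (((AY F hF hC Y).A, Y) ⟶ (((AY F hF hC Y').A, Y') : C × D)) :=
    ⟨fun n => pmor (c' n) (c n),
     fun i j hij => pmor_le (c'.mono hij) (c.mono hij)⟩
  rw [pmor_ωSup c' c e (fun _ => rfl)]
  rw [cpoMapωSup hF e (e.map ⟨fun u => F.map u, fun _ _ h' => cpoMono hF h'⟩) (fun _ => rfl)]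
  exact comp_ωSup_comp (AY F hF hC Y).b
    ((e.map ⟨fun u => F.map u, fun _ _ h' => cpoMono hF h'⟩).map OrderHom.fst)
    (AY F hF hC Y').a c' (fun n => by
      show c' n = (AY F hF hC Y).b ≫ (F.map (pmor (c' n) (c n))).1 ≫ (AY F hF hC Y').a
      rw [h n]
      exact (Gmap_fix F hF hC (c n)).symm)

end main
end ProdCompactAux
namespace ProdCompactAux
set_option linter.unusedSectionVars false

section bifree2
variable {E : Type u₂} [Category.{v₂} E] {T : E ⥤ E} (R : Bifree T)

theorem Bifree.fold_conj {X : E} (x : T.obj X ⟶ X) :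
    R.a ≫ R.fold x = T.map (R.fold x) ≫ x := by
  conv_lhs => rw [← R.fold_fix x]
  rw [← Category.assoc, R.ab, Category.id_comp]

theorem Bifree.unfold_conj {X : E} (x : X ⟶ T.obj X) :
    R.unfold x ≫ R.b = x ≫ T.map (R.unfold x) := by
  conv_lhs => rw [← R.unfold_fix x]
  simp only [Category.assoc]
  rw [R.ab, Category.comp_id]

end bifree2

section main2
variable {C : Type u} {D : Type u₁} [Category.{v} C] [Category.{v₁} D]
  [∀ X Y : C, OmegaCompletePartialOrder (X ⟶ Y)]
  [∀ X Y : D, OmegaCompletePartialOrder (X ⟶ Y)]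
  [CpoCategory C] [CpoCategory D]
variable (F : C × D ⥤ C × D) (hF : IsCpoFunctor F) (hC : CpoAlgebraicallyCompact C)

theorem Gmap_conj {Y Y' : D} (g : Y ⟶ Y') :
    (AY F hF hC Y).a ≫ Gmap F hF hC g
      = (F.map (pmor (Gmap F hF hC g) g)).1 ≫ (AY F hF hC Y').a := by
  conv_lhs => rw [← Gmap_fix F hF hC g]
  rw [← Category.assoc, (AY F hF hC Y).ab, Category.id_comp]

theorem Gmap_conj' {Y Y' : D} (g : Y ⟶ Y') :
    Gmap F hF hC g ≫ (AY F hF hC Y').b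
      = (AY F hF hC Y).b ≫ (F.map (pmor (Gmap F hF hC g) g)).1 := by
  conv_lhs => rw [← Gmap_fix F hF hC g]
  simp only [Category.assoc]
  rw [(AY F hF hC Y').ab]
  exact congrArg (fun z => (AY F hF hC Y).b ≫ z) (Category.comp_id _)

/-- The endofunctor `Y ↦ (F (A_Y, Y)).2` of `D`. -/
@[reducible] noncomputable def HF : D ⥤ D where
  obj Y := (F.obj ((AY F hF hC Y).A, Y)).2
  map {Y Y'} g := (F.map (pmor (Gmap F hF hC g) g)).2
  map_id Y := by
    show (F.map (pmor (Gmap F hF hC (𝟙 Y)) (𝟙 Y))).2 = 𝟙 _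
    rw [Gmap_id, pmor_id, F.map_id]; rfl
  map_comp {Y Y' Y''} g g' := by
    show (F.map (pmor (Gmap F hF hC (g ≫ g')) (g ≫ g'))).2
      = (F.map (pmor (Gmap F hF hC g) g)).2 ≫ (F.map (pmor (Gmap F hF hC g') g')).2
    rw [map_snd_comp F (pmor (Gmap F hF hC g) g) (pmor (Gmap F hF hC g') g'), pmor_comp,
      Gmap_comp]

theorem HF_map {Y Y' : D} (g : Y ⟶ Y') :
    (HF F hF hC).map g = (F.map (pmor (Gmap F hF hC g) g)).2 := rfl

theorem HF_cpo : IsCpoFunctor (HF F hF hC) := by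
  intro Y Y'
  have hm : Monotone (fun g : Y ⟶ Y' => (HF F hF hC).map g) := by
    intro g g' h
    exact (cpoMono hF (pmor_le (Gmap_mono F hF hC h) h)).2
  refine ⟨hm, fun c => ?_⟩
  let K : Chain ((AY F hF hC Y).A ⟶ (AY F hF hC Y').A) :=
    ⟨fun n => Gmap F hF hC (c n), fun i j hij => Gmap_mono F hF hC (c.mono hij)⟩
  let e : Chain (((AY F hF hC Y).A, Y) ⟶ (((AY F hF hC Y').A, Y') : C × D)) :=
    ⟨fun n => pmor (K n) (c n), fun i j hij => pmor_le (K.mono hij) (c.mono hij)⟩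
  show (F.map (pmor (Gmap F hF hC (ωSup c)) (ωSup c))).2 = _
  rw [Gmap_ωSup F hF hC c K (fun _ => rfl), pmor_ωSup K c e (fun _ => rfl),
    cpoMapωSup hF e (e.map ⟨fun u => F.map u, fun _ _ h => cpoMono hF h⟩) (fun _ => rfl)]
  exact ωSup_congr'
    (c := (e.map ⟨fun u => F.map u, fun _ _ h => cpoMono hF h⟩).map OrderHom.snd)
    (c' := c.map ⟨fun g => (HF F hF hC).map g, hm⟩) (fun n => rfl)

end main2
end ProdCompactAux
namespace ProdCompactAux
set_option linter.unusedSectionVars false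
section main3
variable {C : Type u} {D : Type u₁} [Category.{v} C] [Category.{v₁} D]
  [∀ X Y : C, OmegaCompletePartialOrder (X ⟶ Y)]
  [∀ X Y : D, OmegaCompletePartialOrder (X ⟶ Y)]
  [CpoCategory C] [CpoCategory D]
variable (F : C × D ⥤ C × D) (hF : IsCpoFunctor F) (hC : CpoAlgebraicallyCompact C)

/-- Merge two `pmor`-images in the first component. -/
theorem merge_fst {X X' X'' : C} {Y Y' Y'' : D} (p : X ⟶ X') (p' : X' ⟶ X'')
    (q : Y ⟶ Y') (q' : Y' ⟶ Y'') :
    (F.map (pmor p q)).1 ≫ (F.map (pmor p' q')).1 = (F.map (pmor (p ≫ p') (q ≫ q'))).1 := by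
  rw [map_fst_comp, pmor_comp]

theorem merge_snd {X X' X'' : C} {Y Y' Y'' : D} (p : X ⟶ X') (p' : X' ⟶ X'')
    (q : Y ⟶ Y') (q' : Y' ⟶ Y'') :
    (F.map (pmor p q)).2 ≫ (F.map (pmor p' q')).2 = (F.map (pmor (p ≫ p') (q ≫ q'))).2 := by
  rw [map_snd_comp, pmor_comp]

/-- Characterization of the unique algebra map out of `AY` for mixed structures. -/
theorem fold_pm_unique {Y Y' : D} {X : C} (g : Y ⟶ Y') (x : (F.obj (X, Y')).1 ⟶ X)
    (m : (AY F hF hC Y).A ⟶ X)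
    (hm : (AY F hF hC Y).b ≫ (F.map (pmor m g)).1 ≫ x = m) :
    m = (AY F hF hC Y).fold ((F.map (pmor (𝟙 X) g)).1 ≫ x) := by
  apply Bifree.fold_unique
  show (AY F hF hC Y).b ≫ (F.map (pmor m (𝟙 Y))).1 ≫ (F.map (pmor (𝟙 X) g)).1 ≫ x = m
  calc (AY F hF hC Y).b ≫ (F.map (pmor m (𝟙 Y))).1 ≫ (F.map (pmor (𝟙 X) g)).1 ≫ x
      = (AY F hF hC Y).b ≫ ((F.map (pmor m (𝟙 Y))).1 ≫ (F.map (pmor (𝟙 X) g)).1) ≫ x := by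
        simp only [Category.assoc]
    _ = (AY F hF hC Y).b ≫ (F.map (pmor m g)).1 ≫ x := by
        rw [merge_fst, Category.comp_id, Category.id_comp]
    _ = m := hm

/-- Characterization of the unique coalgebra map into `AY` for mixed structures. -/
theorem unfold_pm_unique {Y Y' : D} {X : C} (g : Y ⟶ Y') (x : X ⟶ (F.obj (X, Y)).1)
    (m : X ⟶ (AY F hF hC Y').A)
    (hm : x ≫ (F.map (pmor m g)).1 ≫ (AY F hF hC Y').a = m) :
    m = (AY F hF hC Y').unfold (x ≫ (F.map (pmor (𝟙 X) g)).1) := by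
  apply Bifree.unfold_unique
  show (x ≫ (F.map (pmor (𝟙 X) g)).1) ≫ (F.map (pmor m (𝟙 Y'))).1 ≫ (AY F hF hC Y').a = m
  calc (x ≫ (F.map (pmor (𝟙 X) g)).1) ≫ (F.map (pmor m (𝟙 Y'))).1 ≫ (AY F hF hC Y').a
      = x ≫ ((F.map (pmor (𝟙 X) g)).1 ≫ (F.map (pmor m (𝟙 Y'))).1) ≫ (AY F hF hC Y').a := by
        simp only [Category.assoc]
    _ = x ≫ (F.map (pmor m g)).1 ≫ (AY F hF hC Y').a := by
        rw [merge_fst, Category.comp_id, Category.id_comp]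
    _ = m := hm

section withB
variable (B : Bifree (HF F hF hC))

/-- Carrier of the candidate bifree `F`-algebra. -/
noncomputable def bigA : C × D := ((AY F hF hC B.A).A, B.A)

/-- Structure map of the candidate bifree `F`-algebra. -/
noncomputable def bigStr : F.obj (bigA F hF hC B) ⟶ bigA F hF hC B :=
  ((AY F hF hC B.A).a, B.a)

/-- Inverse of the structure map. -/
noncomputable def bigInv : bigA F hF hC B ⟶ F.obj (bigA F hF hC B) :=
  ((AY F hF hC B.A).b, B.b)

theorem big_ab : bigStr F hF hC B ≫ bigInv F hF hC B = 𝟙 (F.obj (bigA F hF hC B)) :=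
  Prod.ext ((AY F hF hC B.A).ab) B.ab

theorem big_ba : bigInv F hF hC B ≫ bigStr F hF hC B = 𝟙 (bigA F hF hC B) :=
  Prod.ext ((AY F hF hC B.A).ba) B.ba

section withW
variable (W : Endofunctor.Algebra F)

noncomputable def hW : (AY F hF hC W.a.2).A ⟶ W.a.1 :=
  (AY F hF hC W.a.2).fold W.str.1

theorem hW_fix :
    (AY F hF hC W.a.2).b ≫ (F.map (pmor (hW F hF hC W) (𝟙 W.a.2))).1 ≫ W.str.1
      = hW F hF hC W :=
  (AY F hF hC W.a.2).fold_fix W.str.1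

theorem hW_conj :
    (AY F hF hC W.a.2).a ≫ hW F hF hC W
      = (F.map (pmor (hW F hF hC W) (𝟙 W.a.2))).1 ≫ W.str.1 :=
  (AY F hF hC W.a.2).fold_conj W.str.1

noncomputable def wW : (HF F hF hC).obj W.a.2 ⟶ W.a.2 :=
  (F.map (pmor (hW F hF hC W) (𝟙 W.a.2))).2 ≫ W.str.2

noncomputable def vW : B.A ⟶ W.a.2 := B.fold (wW F hF hC W)

theorem vW_conj :
    B.a ≫ vW F hF hC B W
      = (F.map (pmor (Gmap F hF hC (vW F hF hC B W)) (vW F hF hC B W))).2 ≫ wW F hF hC W :=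
  B.fold_conj (wW F hF hC W)

noncomputable def uW : (AY F hF hC B.A).A ⟶ W.a.1 :=
  Gmap F hF hC (vW F hF hC B W) ≫ hW F hF hC W

/-- The key fixed-point equation for composites `Gmap v ≫ hW`. -/
theorem Gh_fix (v' : B.A ⟶ W.a.2) :
    (AY F hF hC B.A).b ≫ (F.map (pmor (Gmap F hF hC v' ≫ hW F hF hC W) v')).1 ≫ W.str.1
      = Gmap F hF hC v' ≫ hW F hF hC W := by
  have hsplit : pmor (Gmap F hF hC v' ≫ hW F hF hC W) v'
      = pmor (Gmap F hF hC v') v' ≫ pmor (hW F hF hC W) (𝟙 W.a.2) := by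
    rw [pmor_comp, Category.comp_id]
  rw [hsplit, ← map_fst_comp]
  simp only [Category.assoc]
  calc (AY F hF hC B.A).b ≫ (F.map (pmor (Gmap F hF hC v') v')).1
        ≫ (F.map (pmor (hW F hF hC W) (𝟙 W.a.2))).1 ≫ W.str.1
      = (AY F hF hC B.A).b ≫ (F.map (pmor (Gmap F hF hC v') v')).1
          ≫ (AY F hF hC W.a.2).a ≫ hW F hF hC W := by rw [← hW_conj]
    _ = ((AY F hF hC B.A).b ≫ (F.map (pmor (Gmap F hF hC v') v')).1
          ≫ (AY F hF hC W.a.2).a) ≫ hW F hF hC W := by simp only [Category.assoc]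
    _ = Gmap F hF hC v' ≫ hW F hF hC W := by rw [Gmap_fix]

theorem big_cond1 :
    (F.map (pmor (uW F hF hC B W) (vW F hF hC B W))).1 ≫ W.str.1
      = (AY F hF hC B.A).a ≫ uW F hF hC B W := by
  show _ = (AY F hF hC B.A).a ≫ Gmap F hF hC (vW F hF hC B W) ≫ hW F hF hC W
  calc (F.map (pmor (uW F hF hC B W) (vW F hF hC B W))).1 ≫ W.str.1
      = (AY F hF hC B.A).a ≫ ((AY F hF hC B.A).b
          ≫ (F.map (pmor (uW F hF hC B W) (vW F hF hC B W))).1 ≫ W.str.1) := by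
        rw [← Category.assoc, (AY F hF hC B.A).ab, Category.id_comp]
    _ = (AY F hF hC B.A).a ≫ Gmap F hF hC (vW F hF hC B W) ≫ hW F hF hC W := by
        rw [show ((AY F hF hC B.A).b
          ≫ (F.map (pmor (uW F hF hC B W) (vW F hF hC B W))).1 ≫ W.str.1)
            = Gmap F hF hC (vW F hF hC B W) ≫ hW F hF hC W from Gh_fix F hF hC B W _]

theorem big_cond2 :
    (F.map (pmor (uW F hF hC B W) (vW F hF hC B W))).2 ≫ W.str.2
      = B.a ≫ vW F hF hC B W := by
  rw [vW_conj]
  show (F.map (pmor (uW F hF hC B W) (vW F hF hC B W))).2 ≫ W.str.2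
      = (F.map (pmor (Gmap F hF hC (vW F hF hC B W)) (vW F hF hC B W))).2
        ≫ (F.map (pmor (hW F hF hC W) (𝟙 W.a.2))).2 ≫ W.str.2
  rw [← Category.assoc, merge_snd, Category.comp_id]
  rfl

theorem big_hom_cond :
    F.map (pmor (uW F hF hC B W) (vW F hF hC B W)) ≫ W.str
      = bigStr F hF hC B ≫ pmor (uW F hF hC B W) (vW F hF hC B W) :=
  Prod.ext (big_cond1 F hF hC B W) (big_cond2 F hF hC B W)

theorem big_hom_unique (u' : (AY F hF hC B.A).A ⟶ W.a.1) (v' : B.A ⟶ W.a.2)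
    (h1 : (F.map (pmor u' v')).1 ≫ W.str.1 = (AY F hF hC B.A).a ≫ u')
    (h2 : (F.map (pmor u' v')).2 ≫ W.str.2 = B.a ≫ v') :
    v' = vW F hF hC B W ∧ u' = uW F hF hC B W := by
  have hu : u' = Gmap F hF hC v' ≫ hW F hF hC W := by
    have e1 : u' = (AY F hF hC B.A).fold ((F.map (pmor (𝟙 W.a.1) v')).1 ≫ W.str.1) := by
      apply fold_pm_unique
      rw [h1, ← Category.assoc, (AY F hF hC B.A).ba, Category.id_comp]
    have e2 : Gmap F hF hC v' ≫ hW F hF hC W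
        = (AY F hF hC B.A).fold ((F.map (pmor (𝟙 W.a.1) v')).1 ≫ W.str.1) := by
      apply fold_pm_unique
      exact Gh_fix F hF hC B W v'
    rw [e1, e2]
  have hv : v' = vW F hF hC B W := by
    apply B.fold_unique
    show B.b ≫ (F.map (pmor (Gmap F hF hC v') v')).2
        ≫ (F.map (pmor (hW F hF hC W) (𝟙 W.a.2))).2 ≫ W.str.2 = v'
    calc B.b ≫ (F.map (pmor (Gmap F hF hC v') v')).2
        ≫ (F.map (pmor (hW F hF hC W) (𝟙 W.a.2))).2 ≫ W.str.2
        = B.b ≫ ((F.map (pmor (Gmap F hF hC v') v')).2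
            ≫ (F.map (pmor (hW F hF hC W) (𝟙 W.a.2))).2) ≫ W.str.2 := by
          simp only [Category.assoc]
      _ = B.b ≫ (F.map (pmor (Gmap F hF hC v' ≫ hW F hF hC W) v')).2 ≫ W.str.2 := by
          rw [merge_snd, Category.comp_id]
      _ = B.b ≫ (F.map (pmor u' v')).2 ≫ W.str.2 := by rw [← hu]
      _ = B.b ≫ B.a ≫ v' := by rw [h2]
      _ = v' := by rw [← Category.assoc, B.ba, Category.id_comp]
  refine ⟨hv, ?_⟩
  rw [hu, hv]
  rfl

end withW

noncomputable def big_init : IsInitial (⟨bigA F hF hC B, bigStr F hF hC B⟩ : Endofunctor.Algebra F) := by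
  apply IsInitial.ofUniqueHom (fun W =>
    ({ f := pmor (uW F hF hC B W) (vW F hF hC B W), h := big_hom_cond F hF hC B W } :
      Endofunctor.Algebra.Hom ⟨bigA F hF hC B, bigStr F hF hC B⟩ W))
  intro W m
  have h1 : (F.map (pmor m.f.1 m.f.2)).1 ≫ W.str.1 = (AY F hF hC B.A).a ≫ m.f.1 :=
    congrArg Prod.fst m.h
  have h2 : (F.map (pmor m.f.1 m.f.2)).2 ≫ W.str.2 = B.a ≫ m.f.2 :=
    congrArg Prod.snd m.h
  obtain ⟨hv, hu⟩ := big_hom_unique F hF hC B W m.f.1 m.f.2 h1 h2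
  exact Endofunctor.Algebra.Hom.ext (Prod.ext hu hv)

end withB
end main3
end ProdCompactAux
namespace ProdCompactAux
set_option linter.unusedSectionVars false
section main4
variable {C : Type u} {D : Type u₁} [Category.{v} C] [Category.{v₁} D]
  [∀ X Y : C, OmegaCompletePartialOrder (X ⟶ Y)]
  [∀ X Y : D, OmegaCompletePartialOrder (X ⟶ Y)]
  [CpoCategory C] [CpoCategory D]
variable (F : C × D ⥤ C × D) (hF : IsCpoFunctor F) (hC : CpoAlgebraicallyCompact C)
variable (B : Bifree (HF F hF hC))

section withWc
variable (W : Endofunctor.Coalgebra F)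

noncomputable def hWc : W.V.1 ⟶ (AY F hF hC W.V.2).A :=
  (AY F hF hC W.V.2).unfold W.str.1

theorem hWc_conj :
    hWc F hF hC W ≫ (AY F hF hC W.V.2).b
      = W.str.1 ≫ (F.map (pmor (hWc F hF hC W) (𝟙 W.V.2))).1 :=
  (AY F hF hC W.V.2).unfold_conj W.str.1

noncomputable def wWc : W.V.2 ⟶ (HF F hF hC).obj W.V.2 :=
  W.str.2 ≫ (F.map (pmor (hWc F hF hC W) (𝟙 W.V.2))).2

noncomputable def vWc : W.V.2 ⟶ B.A := B.unfold (wWc F hF hC W)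

theorem vWc_conj :
    vWc F hF hC B W ≫ B.b
      = wWc F hF hC W ≫ (F.map (pmor (Gmap F hF hC (vWc F hF hC B W)) (vWc F hF hC B W))).2 :=
  B.unfold_conj (wWc F hF hC W)

noncomputable def uWc : W.V.1 ⟶ (AY F hF hC B.A).A :=
  hWc F hF hC W ≫ Gmap F hF hC (vWc F hF hC B W)

/-- The key fixed-point equation for composites `hWc ≫ Gmap v`. -/
theorem hG_fix (v' : W.V.2 ⟶ B.A) :
    W.str.1 ≫ (F.map (pmor (hWc F hF hC W ≫ Gmap F hF hC v') v')).1 ≫ (AY F hF hC B.A).a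
      = hWc F hF hC W ≫ Gmap F hF hC v' := by
  have hsplit : pmor (hWc F hF hC W ≫ Gmap F hF hC v') v'
      = pmor (hWc F hF hC W) (𝟙 W.V.2) ≫ pmor (Gmap F hF hC v') v' := by
    rw [pmor_comp, Category.id_comp]
  rw [hsplit, ← map_fst_comp]
  simp only [Category.assoc]
  calc W.str.1 ≫ (F.map (pmor (hWc F hF hC W) (𝟙 W.V.2))).1
        ≫ (F.map (pmor (Gmap F hF hC v') v')).1 ≫ (AY F hF hC B.A).a
      = (W.str.1 ≫ (F.map (pmor (hWc F hF hC W) (𝟙 W.V.2))).1)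
          ≫ (F.map (pmor (Gmap F hF hC v') v')).1 ≫ (AY F hF hC B.A).a := by
        simp only [Category.assoc]
    _ = (hWc F hF hC W ≫ (AY F hF hC W.V.2).b)
          ≫ (F.map (pmor (Gmap F hF hC v') v')).1 ≫ (AY F hF hC B.A).a := by
        rw [hWc_conj]
    _ = hWc F hF hC W ≫ ((AY F hF hC W.V.2).b
          ≫ (F.map (pmor (Gmap F hF hC v') v')).1 ≫ (AY F hF hC B.A).a) := by
        simp only [Category.assoc]
    _ = hWc F hF hC W ≫ Gmap F hF hC v' := by rw [Gmap_fix]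

theorem bigc_cond1 :
    W.str.1 ≫ (F.map (pmor (uWc F hF hC B W) (vWc F hF hC B W))).1
      = uWc F hF hC B W ≫ (AY F hF hC B.A).b := by
  show _ = (hWc F hF hC W ≫ Gmap F hF hC (vWc F hF hC B W)) ≫ (AY F hF hC B.A).b
  have hsplit : pmor (uWc F hF hC B W) (vWc F hF hC B W)
      = pmor (hWc F hF hC W) (𝟙 W.V.2) ≫ pmor (Gmap F hF hC (vWc F hF hC B W)) (vWc F hF hC B W) := by
    rw [pmor_comp, Category.id_comp]
    rfl
  rw [hsplit, ← map_fst_comp]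
  calc W.str.1 ≫ (F.map (pmor (hWc F hF hC W) (𝟙 W.V.2))).1
        ≫ (F.map (pmor (Gmap F hF hC (vWc F hF hC B W)) (vWc F hF hC B W))).1
      = (W.str.1 ≫ (F.map (pmor (hWc F hF hC W) (𝟙 W.V.2))).1)
          ≫ (F.map (pmor (Gmap F hF hC (vWc F hF hC B W)) (vWc F hF hC B W))).1 := by
        simp only [Category.assoc]
    _ = hWc F hF hC W ≫ (AY F hF hC W.V.2).b
          ≫ (F.map (pmor (Gmap F hF hC (vWc F hF hC B W)) (vWc F hF hC B W))).1 := by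
        rw [← hWc_conj]; simp only [Category.assoc]
    _ = hWc F hF hC W ≫ Gmap F hF hC (vWc F hF hC B W) ≫ (AY F hF hC B.A).b := by
        rw [← Gmap_conj']
    _ = (hWc F hF hC W ≫ Gmap F hF hC (vWc F hF hC B W)) ≫ (AY F hF hC B.A).b := by
        simp only [Category.assoc]

theorem bigc_cond2 :
    W.str.2 ≫ (F.map (pmor (uWc F hF hC B W) (vWc F hF hC B W))).2
      = vWc F hF hC B W ≫ B.b := by
  rw [vWc_conj]
  show W.str.2 ≫ (F.map (pmor (uWc F hF hC B W) (vWc F hF hC B W))).2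
      = (W.str.2 ≫ (F.map (pmor (hWc F hF hC W) (𝟙 W.V.2))).2)
        ≫ (F.map (pmor (Gmap F hF hC (vWc F hF hC B W)) (vWc F hF hC B W))).2
  simp only [Category.assoc]
  rw [merge_snd, Category.id_comp]
  rfl

theorem bigc_hom_cond :
    W.str ≫ F.map (pmor (uWc F hF hC B W) (vWc F hF hC B W))
      = pmor (uWc F hF hC B W) (vWc F hF hC B W) ≫ bigInv F hF hC B :=
  Prod.ext (bigc_cond1 F hF hC B W) (bigc_cond2 F hF hC B W)

theorem bigc_hom_unique (u' : W.V.1 ⟶ (AY F hF hC B.A).A) (v' : W.V.2 ⟶ B.A)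
    (h1 : W.str.1 ≫ (F.map (pmor u' v')).1 = u' ≫ (AY F hF hC B.A).b)
    (h2 : W.str.2 ≫ (F.map (pmor u' v')).2 = v' ≫ B.b) :
    v' = vWc F hF hC B W ∧ u' = uWc F hF hC B W := by
  have hu : u' = hWc F hF hC W ≫ Gmap F hF hC v' := by
    have e1 : u' = (AY F hF hC B.A).unfold (W.str.1 ≫ (F.map (pmor (𝟙 W.V.1) v')).1) := by
      apply unfold_pm_unique
      rw [← Category.assoc, h1, Category.assoc, (AY F hF hC B.A).ba, Category.comp_id]
    have e2 : hWc F hF hC W ≫ Gmap F hF hC v'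
        = (AY F hF hC B.A).unfold (W.str.1 ≫ (F.map (pmor (𝟙 W.V.1) v')).1) := by
      apply unfold_pm_unique
      exact hG_fix F hF hC B W v'
    rw [e1, e2]
  have hv : v' = vWc F hF hC B W := by
    apply B.unfold_unique
    show (W.str.2 ≫ (F.map (pmor (hWc F hF hC W) (𝟙 W.V.2))).2)
        ≫ (F.map (pmor (Gmap F hF hC v') v')).2 ≫ B.a = v'
    calc (W.str.2 ≫ (F.map (pmor (hWc F hF hC W) (𝟙 W.V.2))).2)
          ≫ (F.map (pmor (Gmap F hF hC v') v')).2 ≫ B.a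
        = W.str.2 ≫ ((F.map (pmor (hWc F hF hC W) (𝟙 W.V.2))).2
            ≫ (F.map (pmor (Gmap F hF hC v') v')).2) ≫ B.a := by
          simp only [Category.assoc]
      _ = W.str.2 ≫ (F.map (pmor (hWc F hF hC W ≫ Gmap F hF hC v') v')).2 ≫ B.a := by
          rw [merge_snd, Category.id_comp]
      _ = W.str.2 ≫ (F.map (pmor u' v')).2 ≫ B.a := by rw [← hu]
      _ = (W.str.2 ≫ (F.map (pmor u' v')).2) ≫ B.a := by simp only [Category.assoc]
      _ = v' ≫ B.b ≫ B.a := by rw [h2]; simp only [Category.assoc]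
      _ = v' := by rw [B.ba, Category.comp_id]
  refine ⟨hv, ?_⟩
  rw [hu, hv]
  rfl

end withWc

noncomputable def big_term :
    IsTerminal (⟨bigA F hF hC B, bigInv F hF hC B⟩ : Endofunctor.Coalgebra F) := by
  apply IsTerminal.ofUniqueHom (fun W =>
    ({ f := pmor (uWc F hF hC B W) (vWc F hF hC B W), h := bigc_hom_cond F hF hC B W } :
      Endofunctor.Coalgebra.Hom W ⟨bigA F hF hC B, bigInv F hF hC B⟩))
  intro W m
  have h1 : W.str.1 ≫ (F.map (pmor m.f.1 m.f.2)).1 = m.f.1 ≫ (AY F hF hC B.A).b :=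
    congrArg Prod.fst m.h
  have h2 : W.str.2 ≫ (F.map (pmor m.f.1 m.f.2)).2 = m.f.2 ≫ B.b :=
    congrArg Prod.snd m.h
  obtain ⟨hv, hu⟩ := bigc_hom_unique F hF hC B W m.f.1 m.f.2 h1 h2
  exact Endofunctor.Coalgebra.Hom.ext (Prod.ext hu hv)

end main4
end ProdCompactAux

/-- The product of two `Cpo`-algebraically compact `Cpo`-categories (a
`Cpo`-category with hom-sets ordered componentwise) is `Cpo`-algebraically
compact. -/
theorem prod_cpo_algebraically_compact
    (C : Type u) (D : Type u₁) [Category.{v} C] [Category.{v₁} D]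
    [∀ X Y : C, OmegaCompletePartialOrder (X ⟶ Y)]
    [∀ X Y : D, OmegaCompletePartialOrder (X ⟶ Y)]
    [CpoCategory C] [CpoCategory D]
    (hC : CpoAlgebraicallyCompact C) (hD : CpoAlgebraicallyCompact D) :
    CpoAlgebraicallyCompact (C × D) := by
  intro F hF
  obtain ⟨B⟩ := ProdCompactAux.exists_bifree hD (ProdCompactAux.HF F hF hC)
    (ProdCompactAux.HF_cpo F hF hC)
  exact ⟨⟨ProdCompactAux.bigA F hF hC B, ProdCompactAux.bigStr F hF hC B⟩,
    ⟨ProdCompactAux.big_init F hF hC B⟩,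
    ProdCompactAux.bigInv F hF hC B,
    ProdCompactAux.big_ab F hF hC B,
    ProdCompactAux.big_ba F hF hC B,
    ⟨ProdCompactAux.big_term F hF hC B⟩⟩
end

section
/- Final invariants lift along right Cpo-adjoints: let C and D be Cpo-categories and let R : D ⥤ C be a right Cpo-adjoint, i.e. R admits a left adjoint L : C ⥤ D whose hom-set bijections C(X, R.obj Y) ≃ D(L.obj X, Y) are order isomorphisms. Let H : D ⥤ D and G : C ⥤ C be Cpo-endofunctors together with a natural isomorphism φ : H ⋙ R ≅ R ⋙ G. If (X, x : X ⟶ H.obj X) is a terminal H-coalgebra and (Z, z : Z ⟶ G.obj Z) is a terminal G-coalgebra, then the unique G-coalgebra morphism ψ from the G-coalgebra (R.obj X, R.map x ≫ φ.hom.app X) to (Z, z) is an isomorphism; in particular R.obj X ≅ Z. -/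
open CategoryTheory OmegaCompletePartialOrder Limits

universe w v u v₁ u₁ v₂ u₂

section Aux

variable {C : Type u} {D : Type u₁} [Category.{v} C] [Category.{v₁} D]

/-- Lift of a `G`-coalgebra along the left adjoint, using the mate of `φ`. -/
def liftCoalg (R : D ⥤ C) (L : C ⥤ D) (adj : L ⊣ R)
    (H : D ⥤ D) (G : C ⥤ C) (φ : H ⋙ R ≅ R ⋙ G) (W : Endofunctor.Coalgebra G) : Endofunctor.Coalgebra H :=
  ⟨L.obj W.V, L.map W.str ≫ L.map (G.map (adj.unit.app W.V) ≫ φ.inv.app (L.obj W.V)) ≫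
      adj.counit.app (H.obj (L.obj W.V))⟩

lemma key (R : D ⥤ C) (L : C ⥤ D) (adj : L ⊣ R)
    (H : D ⥤ D) (G : C ⥤ C) (φ : H ⋙ R ≅ R ⋙ G) (Xc : Endofunctor.Coalgebra H) (W : Endofunctor.Coalgebra G)
    (f : L.obj W.V ⟶ Xc.V) :
    ((liftCoalg R L adj H G φ W).str ≫ H.map f = f ≫ Xc.str) ↔
      (W.str ≫ G.map (adj.unit.app W.V ≫ R.map f)
        = (adj.unit.app W.V ≫ R.map f) ≫ (R.map Xc.str ≫ φ.hom.app Xc.V)) := by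
  set g : W.V ⟶ R.obj Xc.V := adj.unit.app W.V ≫ R.map f with hg
  have hinj : ∀ (a b : L.obj W.V ⟶ H.obj Xc.V),
      a = b ↔ adj.unit.app W.V ≫ R.map a = adj.unit.app W.V ≫ R.map b := by
    intro a b
    constructor
    · intro h; rw [h]
    · intro h
      apply (adj.homEquiv W.V (H.obj Xc.V)).injective
      rwa [adj.homEquiv_unit, adj.homEquiv_unit]
  have e1 : adj.unit.app W.V ≫ R.map ((liftCoalg R L adj H G φ W).str ≫ H.map f)
      = W.str ≫ G.map g ≫ φ.inv.app Xc.V := by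
    have n1 : adj.unit.app W.V ≫ R.map (L.map W.str)
        = W.str ≫ adj.unit.app (G.obj W.V) := (adj.unit.naturality W.str).symm
    have n2 : adj.unit.app (G.obj W.V) ≫ R.map (L.map (G.map (adj.unit.app W.V)))
        = G.map (adj.unit.app W.V) ≫ adj.unit.app (G.obj (R.obj (L.obj W.V))) :=
      (adj.unit.naturality (G.map (adj.unit.app W.V))).symm
    have n3 : adj.unit.app (G.obj (R.obj (L.obj W.V)))
          ≫ R.map (L.map (φ.inv.app (L.obj W.V)))
        = φ.inv.app (L.obj W.V) ≫ adj.unit.app (R.obj (H.obj (L.obj W.V))) :=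
      (adj.unit.naturality (φ.inv.app (L.obj W.V))).symm
    have n4 : adj.unit.app (R.obj (H.obj (L.obj W.V)))
          ≫ R.map (adj.counit.app (H.obj (L.obj W.V))) = 𝟙 _ :=
      adj.right_triangle_components _
    have n5 : φ.inv.app (L.obj W.V) ≫ R.map (H.map f)
        = G.map (R.map f) ≫ φ.inv.app Xc.V := by
      simpa using (φ.inv.naturality f).symm
    simp only [liftCoalg, Functor.map_comp, ← Category.assoc]
    rw [n1]
    simp only [Category.assoc]
    rw [reassoc_of% n2, reassoc_of% n3, reassoc_of% n4, n5]
    simp [hg]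
  have e2 : adj.unit.app W.V ≫ R.map (f ≫ Xc.str) = g ≫ R.map Xc.str := by
    simp [hg]
  refine (hinj _ _).trans ?_
  refine (Eq.congr e1 e2).trans ?_
  rw [← Category.assoc]
  constructor
  · intro h
    have h2 := congrArg (fun t => t ≫ φ.hom.app Xc.V) h
    simpa [Category.assoc] using h2
  · intro h
    have h2 := congrArg (fun t => t ≫ φ.inv.app Xc.V) h
    simpa [Category.assoc] using h2

/-- The lifted coalgebra `(R X, R x ≫ φ)` is terminal. -/
noncomputable def lift_terminal (R : D ⥤ C) (L : C ⥤ D) (adj : L ⊣ R)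
    (H : D ⥤ D) (G : C ⥤ C) (φ : H ⋙ R ≅ R ⋙ G) (Xc : Endofunctor.Coalgebra H) (hX : IsTerminal Xc) :
    IsTerminal (⟨R.obj Xc.V, R.map Xc.str ≫ φ.hom.app Xc.V⟩ : Endofunctor.Coalgebra G) := by
  refine IsTerminal.ofUniqueHom
    (Y := (⟨R.obj Xc.V, R.map Xc.str ≫ φ.hom.app Xc.V⟩ : Endofunctor.Coalgebra G))
    (fun W => Endofunctor.Coalgebra.Hom.mk
      (adj.unit.app W.V ≫ R.map (hX.from (liftCoalg R L adj H G φ W)).f)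
      ((key R L adj H G φ Xc W _).mp (hX.from (liftCoalg R L adj H G φ W)).h)) ?_
  intro W m
  have hms : adj.unit.app W.V ≫ R.map ((adj.homEquiv W.V Xc.V).symm m.f) = m.f := by
    have h0 := (adj.homEquiv W.V Xc.V).apply_symm_apply m.f
    rwa [Adjunction.homEquiv_unit] at h0
  have hf' : (liftCoalg R L adj H G φ W).str
        ≫ H.map ((adj.homEquiv W.V Xc.V).symm m.f)
      = (adj.homEquiv W.V Xc.V).symm m.f ≫ Xc.str := by
    apply (key R L adj H G φ Xc W _).mpr
    rw [hms]
    exact m.h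
  have huniq : (Endofunctor.Coalgebra.Hom.mk ((adj.homEquiv W.V Xc.V).symm m.f) hf' :
        liftCoalg R L adj H G φ W ⟶ Xc) = hX.from _ := hX.hom_ext _ _
  have hfeq : (adj.homEquiv W.V Xc.V).symm m.f = (hX.from (liftCoalg R L adj H G φ W)).f :=
    congrArg Endofunctor.Coalgebra.Hom.f huniq
  apply Endofunctor.Coalgebra.Hom.ext
  show m.f = adj.unit.app W.V ≫ R.map (hX.from (liftCoalg R L adj H G φ W)).f
  rw [← hfeq]
  exact hms.symm

end Aux

/-- Final invariants lift along right `Cpo`-adjoints: if `R : D ⥤ C` has a left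
adjoint whose hom-set bijections are order isomorphisms, `H` and `G` are
`Cpo`-endofunctors with `φ : H ⋙ R ≅ R ⋙ G`, and `(X, x)`, `(Z, z)` are
terminal coalgebras of `H` and `G`, then the unique `G`-coalgebra morphism from
`(R.obj X, R.map x ≫ φ.hom.app X)` to `(Z, z)` is an isomorphism. -/


theorem final_invariants_lift_along_right_cpo_adjoint
    {C : Type u} {D : Type u₁} [Category.{v} C] [Category.{v₁} D]
    [∀ X Y : C, OmegaCompletePartialOrder (X ⟶ Y)]
    [∀ X Y : D, OmegaCompletePartialOrder (X ⟶ Y)]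
    [CpoCategory C] [CpoCategory D]
    (R : D ⥤ C) (L : C ⥤ D) (adj : L ⊣ R)
    (hadj : ∀ (X : C) (Y : D) (f g : L.obj X ⟶ Y),
        f ≤ g ↔ adj.homEquiv X Y f ≤ adj.homEquiv X Y g)
    (H : D ⥤ D) (hH : IsCpoFunctor H) (G : C ⥤ C) (hG : IsCpoFunctor G)
    (φ : H ⋙ R ≅ R ⋙ G)
    (Xc : Endofunctor.Coalgebra H) (hX : IsTerminal Xc)
    (Zc : Endofunctor.Coalgebra G) (hZ : IsTerminal Zc) :
    IsIso (hZ.from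
      (⟨R.obj Xc.V, R.map Xc.str ≫ φ.hom.app Xc.V⟩ : Endofunctor.Coalgebra G)).f := by
  have ht := lift_terminal R L adj H G φ Xc hX
  set RXc : Endofunctor.Coalgebra G := ⟨R.obj Xc.V, R.map Xc.str ≫ φ.hom.app Xc.V⟩
  have : IsIso (hZ.from RXc) :=
    ⟨ht.from Zc, ht.hom_ext _ _, hZ.hom_ext _ _⟩
  exact (inferInstance : IsIso ((Endofunctor.Coalgebra.forget G).map (hZ.from RXc)))
end
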